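/- Let Φ be a homogeneous Poisson point process on ℝ^d with intensity λ. Then almost surely Φ contains no infinite descending chain, i.e., no infinite sequence of distinct points x_0, x_1, x_2, ... of Φ with d(x_{i+1}, x_{i+2}) < d(x_i, x_{i+1}) for all i. -/

import Mathlib

open MeasureTheory

/-- `Φ` is a homogeneous Poisson point process of intensity `lam` on `ℝ^d`:
it is a.s. locally finite, counts in bounded Borel sets are Poisson distributed with
mean `lam · vol`, and counts in pairwise disjoint Borel sets are independent. -/
def IsPoissonPP (d : ℕ) (lam : ℝ) {Ω : Type*} [MeasurableSpace Ω] (P : Measure Ω)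
    (Φ : Ω → Set (EuclideanSpace ℝ (Fin d))) : Prop :=
  (∀ ω, ∀ A : Set (EuclideanSpace ℝ (Fin d)), Bornology.IsBounded A → (Φ ω ∩ A).Finite) ∧
  (∀ A : Set (EuclideanSpace ℝ (Fin d)), MeasurableSet A → volume A < ⊤ → ∀ k : ℕ,
    P {ω | (Φ ω ∩ A).ncard = k} =
      ENNReal.ofReal (Real.exp (-(lam * (volume A).toReal))
        * (lam * (volume A).toReal) ^ k / (Nat.factorial k : ℝ))) ∧
  (∀ (n : ℕ) (A : Fin n → Set (EuclideanSpace ℝ (Fin d))),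
    (∀ i, MeasurableSet (A i)) → Pairwise (Function.onFun Disjoint A) →
    ProbabilityTheory.iIndepFun
      (fun i ω => (Φ ω ∩ A i).ncard) P)

open Metric Set Function ENNReal

noncomputable section

namespace PoissonNDC

variable {d : ℕ}

/-- lower-left corner of grid cube -/
def corner (δ : ℝ) (z : Fin d → ℤ) : EuclideanSpace ℝ (Fin d) := WithLp.toLp 2 (fun j => (z j : ℝ) * δ)

def cube (δ : ℝ) (z : Fin d → ℤ) : Set (EuclideanSpace ℝ (Fin d)) :=
  {x | ∀ j, (z j : ℝ) * δ ≤ x j ∧ x j < (z j : ℝ) * δ + δ}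

def gridOf (δ : ℝ) (x : EuclideanSpace ℝ (Fin d)) : Fin d → ℤ := fun j => ⌊x j / δ⌋

lemma mem_cube_gridOf {δ : ℝ} (hδ : 0 < δ) (x : EuclideanSpace ℝ (Fin d)) :
    x ∈ cube δ (gridOf δ x) := by
  intro j
  have h1 : ((⌊x j / δ⌋ : ℝ)) * δ ≤ (x j / δ) * δ :=
    mul_le_mul_of_nonneg_right (Int.floor_le _) hδ.le
  have h2 : (x j / δ) * δ < ((⌊x j / δ⌋ : ℝ) + 1) * δ :=
    mul_lt_mul_of_pos_right (Int.lt_floor_add_one _) hδ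
  rw [div_mul_cancel₀ _ hδ.ne'] at h1 h2
  exact ⟨h1, by simpa [gridOf, mul_add, add_mul] using h2⟩

lemma dist_corner_le {δ : ℝ} (hδ : 0 < δ) {z : Fin d → ℤ}
    {x : EuclideanSpace ℝ (Fin d)} (hx : x ∈ cube δ z) :
    dist x (corner δ z) ≤ δ * Real.sqrt d := by
  rw [EuclideanSpace.dist_eq]
  have h1 : ∑ j, dist (x j) (corner δ z j) ^ 2 ≤ (d : ℝ) * δ ^ 2 := by
    calc ∑ j, dist (x j) (corner δ z j) ^ 2 ≤ ∑ _j : Fin d, δ ^ 2 := by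
          apply Finset.sum_le_sum
          intro j _
          have h := hx j
          have : |x j - (z j : ℝ) * δ| ≤ δ := by
            rw [abs_le]; constructor <;> [linarith [h.1]; linarith [h.2]]
          calc dist (x j) (corner δ z j) ^ 2 = |x j - (z j : ℝ) * δ| ^ 2 := by
                rw [Real.dist_eq]; rfl
            _ ≤ δ ^ 2 := by
                have := abs_nonneg (x j - (z j : ℝ) * δ)
                nlinarith
      _ = (d : ℝ) * δ ^ 2 := by simp [Finset.sum_const, mul_comm]
  calc Real.sqrt (∑ j, dist (x j) (corner δ z j) ^ 2) ≤ Real.sqrt ((d : ℝ) * δ ^ 2) :=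
        Real.sqrt_le_sqrt h1
    _ = δ * Real.sqrt d := by
        rw [Real.sqrt_mul (by positivity), Real.sqrt_sq hδ.le]; ring

lemma cube_disjoint {δ : ℝ} (hδ : 0 < δ) {z z' : Fin d → ℤ} (h : z ≠ z') :
    Disjoint (cube δ z) (cube δ z') := by
  rw [Set.disjoint_left]
  rintro x hx hx'
  apply h
  funext j
  by_contra hj
  have h1 := hx j
  have h2 := hx' j
  rcases lt_or_gt_of_ne hj with hlt | hlt
  · have : (z j : ℝ) + 1 ≤ (z' j : ℝ) := by exact_mod_cast hlt
    nlinarith [h1.2, h2.1]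
  · have : (z' j : ℝ) + 1 ≤ (z j : ℝ) := by exact_mod_cast hlt
    nlinarith [h2.2, h1.1]

lemma cube_measurable (δ : ℝ) (z : Fin d → ℤ) : MeasurableSet (cube δ z) := by
  have : cube δ z = ⋂ j, (fun x : EuclideanSpace ℝ (Fin d) => x j) ⁻¹'
      (Set.Ico ((z j : ℝ) * δ) ((z j : ℝ) * δ + δ)) := by
    ext x; simp [cube, Set.mem_Ico, forall_and]
  rw [this]
  exact MeasurableSet.iInter fun j =>
    ((EuclideanSpace.proj j).continuous.measurable) measurableSet_Ico

lemma cube_bounded {δ : ℝ} (hδ : 0 < δ) (z : Fin d → ℤ) :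
    Bornology.IsBounded (cube δ z) := by
  apply (Metric.isBounded_closedBall (x := corner δ z) (r := δ * Real.sqrt d)).subset
  intro x hx
  exact Metric.mem_closedBall.mpr (dist_corner_le hδ hx)

lemma cube_volume {δ : ℝ} (hδ : 0 < δ) (z : Fin d → ℤ) :
    volume (cube δ z) = ENNReal.ofReal (δ ^ d) := by
  have hmp := EuclideanSpace.volume_preserving_symm_measurableEquiv_toLp (Fin d)
  have hc : cube δ z = (MeasurableEquiv.toLp 2 (Fin d → ℝ)).symm ⁻¹'
      (Set.univ.pi fun j => Set.Ico ((z j : ℝ) * δ) ((z j : ℝ) * δ + δ)) := by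
    ext x; simp [cube, Set.mem_pi, MeasurableEquiv.toLp]; rfl
  rw [hc, hmp.measure_preimage
    ((MeasurableSet.univ_pi fun j => measurableSet_Ico).nullMeasurableSet)]
  rw [volume_pi_pi]
  simp only [Real.volume_Ico, add_sub_cancel_left]
  rw [Finset.prod_const, ENNReal.ofReal_pow hδ.le]
  simp


lemma finset_card_bound {δ : ℝ} (hδ : 0 < δ) {W : Set (EuclideanSpace ℝ (Fin d))}
    (F : Finset (Fin d → ℤ)) (h : ∀ u ∈ F, cube δ u ⊆ W) :
    (F.card : ℝ≥0∞) * ENNReal.ofReal (δ ^ d) ≤ volume W := by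
  have hdisj : (↑F : Set (Fin d → ℤ)).Pairwise (Disjoint on fun u => cube δ u) :=
    fun u _ u' _ huu => cube_disjoint hδ huu
  calc (F.card : ℝ≥0∞) * ENNReal.ofReal (δ ^ d) = ∑ u ∈ F, volume (cube δ u) := by
        simp [cube_volume hδ, Finset.sum_const, nsmul_eq_mul]
    _ = volume (⋃ u ∈ F, cube δ u) :=
        (measure_biUnion_finset hdisj (fun u _ => cube_measurable δ u)).symm
    _ ≤ volume W := measure_mono (by simp only [Set.iUnion_subset_iff]; exact h)

lemma set_finite_of_cubes {δ : ℝ} (hδ : 0 < δ) {W : Set (EuclideanSpace ℝ (Fin d))}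
    (hW : volume W ≠ ⊤) {T : Set (Fin d → ℤ)} (hT : ∀ u ∈ T, cube δ u ⊆ W) : T.Finite := by
  by_contra hinf
  replace hinf : T.Infinite := hinf
  have hpos : (0:ℝ≥0∞) < ENNReal.ofReal (δ ^ d) := ENNReal.ofReal_pos.mpr (by positivity)
  have hdivtop : volume W / ENNReal.ofReal (δ ^ d) ≠ ⊤ :=
    (ENNReal.div_lt_top hW hpos.ne').ne
  obtain ⟨n, hn⟩ := ENNReal.exists_nat_gt hdivtop
  obtain ⟨F, hFsub, hFcard⟩ := hinf.exists_subset_card_eq n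
  have hb := finset_card_bound hδ F (fun u hu => hT u (hFsub hu))
  rw [hFcard] at hb
  have hlt : volume W < (n : ℝ≥0∞) * ENNReal.ofReal (δ ^ d) := by
    rw [← ENNReal.div_lt_iff (Or.inl hpos.ne') (Or.inl ENNReal.ofReal_ne_top)]
    exact hn
  exact absurd hb (not_le.mpr hlt)

variable {lam : ℝ} {Ω : Type*} [MeasurableSpace Ω] {P : Measure Ω} [IsProbabilityMeasure P]
  {Φ : Ω → Set (EuclideanSpace ℝ (Fin d))}

lemma tail_bound (hΦ : IsPoissonPP d lam P Φ) (hlam : 0 < lam)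
    {A : Set (EuclideanSpace ℝ (Fin d))} (hA : MeasurableSet A) (hb : Bornology.IsBounded A)
    (k : ℕ) :
    P {ω | k ≤ (Φ ω ∩ A).ncard} ≤ ENNReal.ofReal ((lam * (volume A).toReal) ^ k) := by
  obtain ⟨R, hR⟩ := hb.subset_closedBall 0
  have hvol : volume A < ⊤ := lt_of_le_of_lt (measure_mono hR) measure_closedBall_lt_top
  set μ : ℝ := lam * (volume A).toReal with hμ
  have hμ0 : 0 ≤ μ := mul_nonneg hlam.le ENNReal.toReal_nonneg
  have hsub : {ω | k ≤ (Φ ω ∩ A).ncard} ⊆ ⋃ i : ℕ, {ω | (Φ ω ∩ A).ncard = k + i} := by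
    intro ω hω
    simp only [Set.mem_setOf_eq] at hω
    exact Set.mem_iUnion.mpr ⟨(Φ ω ∩ A).ncard - k, by simp only [Set.mem_setOf_eq]; omega⟩
  have hexp : HasSum (fun i : ℕ => Real.exp (-μ) * (μ ^ i / i.factorial)) 1 := by
    have h := (NormedSpace.expSeries_div_hasSum_exp μ).mul_left (Real.exp (-μ))
    rw [← Real.exp_eq_exp_ℝ] at h
    simpa [← Real.exp_add] using h
  calc P {ω | k ≤ (Φ ω ∩ A).ncard} ≤ ∑' i : ℕ, P {ω | (Φ ω ∩ A).ncard = k + i} :=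
        le_trans (measure_mono hsub) (measure_iUnion_le _)
    _ ≤ ∑' i : ℕ, ENNReal.ofReal (μ ^ k * (Real.exp (-μ) * (μ ^ i / i.factorial))) := by
        apply ENNReal.tsum_le_tsum
        intro i
        rw [hΦ.2.1 A hA hvol (k + i)]
        apply ENNReal.ofReal_le_ofReal
        have h1 : Real.exp (-μ) * (μ^k*μ^i) / ((k+i).factorial:ℝ) ≤
            Real.exp (-μ) * (μ^k*μ^i) / (i.factorial:ℝ) := by
          apply div_le_div_of_nonneg_left (by positivity) (by positivity)
            (by exact_mod_cast Nat.factorial_le (Nat.le_add_left i k))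
        calc Real.exp (-μ) * μ^(k+i) / ((k+i).factorial:ℝ)
            = Real.exp (-μ) * (μ^k*μ^i) / ((k+i).factorial:ℝ) := by rw [pow_add]
          _ ≤ Real.exp (-μ) * (μ^k*μ^i) / (i.factorial:ℝ) := h1
          _ = μ^k * (Real.exp (-μ) * (μ^i / i.factorial)) := by ring
    _ = ENNReal.ofReal (μ ^ k) *
        ∑' i : ℕ, ENNReal.ofReal (Real.exp (-μ) * (μ ^ i / i.factorial)) := by
        rw [← ENNReal.tsum_mul_left]
        congr 1; funext i; rw [ENNReal.ofReal_mul (by positivity)]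
    _ = ENNReal.ofReal (μ ^ k) := by
        have hts : ∑' i : ℕ, ENNReal.ofReal (Real.exp (-μ) * (μ ^ i / i.factorial)) = 1 := by
          rw [← ENNReal.ofReal_tsum_of_nonneg (fun i => by positivity) hexp.summable,
            hexp.tsum_eq, ENNReal.ofReal_one]
        rw [hts, mul_one]

lemma joint_bound (hΦ : IsPoissonPP d lam P Φ) (hlam : 0 < lam) {δ : ℝ} (hδ : 0 < δ)
    {p : ℕ} {R : Fin p → Fin d → ℤ} (hR : Function.Injective R) (j : Fin p → ℕ) :
    P {ω | ∀ t, j t ≤ (Φ ω ∩ cube δ (R t)).ncard} ≤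
      ENNReal.ofReal ((lam * δ ^ d) ^ (∑ t, j t)) := by
  have hind := hΦ.2.2 p (fun t => cube δ (R t)) (fun t => cube_measurable δ (R t))
    (fun t t' htt' => cube_disjoint hδ (fun h => htt' (hR h)))
  have hset : {ω | ∀ t, j t ≤ (Φ ω ∩ cube δ (R t)).ncard} =
      ⋂ t, (fun ω => (Φ ω ∩ cube δ (R t)).ncard) ⁻¹' Set.Ici (j t) := by
    ext ω; simp [Set.mem_iInter, Set.mem_preimage]
  rw [hset, hind.meas_iInter (fun t => ⟨Set.Ici (j t), MeasurableSpace.measurableSet_top, rfl⟩)]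
  calc ∏ t, P ((fun ω => (Φ ω ∩ cube δ (R t)).ncard) ⁻¹' Set.Ici (j t))
      ≤ ∏ t, ENNReal.ofReal ((lam * δ ^ d) ^ (j t)) := by
        apply Finset.prod_le_prod'
        intro t _
        have h := tail_bound hΦ hlam (cube_measurable δ (R t)) (cube_bounded hδ (R t)) (j t)
        simpa [cube_volume hδ, ENNReal.toReal_ofReal (by positivity : (0:ℝ) ≤ δ ^ d), Set.preimage, Set.mem_Ici] using h
    _ = ENNReal.ofReal ((lam * δ ^ d) ^ (∑ t, j t)) := by
        rw [← ENNReal.ofReal_prod_of_nonneg (fun t _ => by positivity)]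
        congr 1
        rw [← Finset.prod_pow_eq_pow_sum]


set_option maxHeartbeats 1000000 in
lemma tuple_bound (hΦ : IsPoissonPP d lam P Φ) (hlam : 0 < lam) {δ : ℝ} (hδ : 0 < δ)
    (n : ℕ) (z : Fin (n+1) → Fin d → ℤ) :
    P {ω | ∃ y : Fin (n+1) → EuclideanSpace ℝ (Fin d), Function.Injective y ∧
        ∀ i, y i ∈ Φ ω ∩ cube δ (z i)} ≤ ENNReal.ofReal ((lam * δ ^ d) ^ (n+1)) := by
  classical
  set F : Finset (Fin d → ℤ) := Finset.image z Finset.univ with hF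
  set e : Fin F.card ≃ {w // w ∈ F} := F.equivFin.symm with he
  set R : Fin F.card → Fin d → ℤ := fun t => (e t : Fin d → ℤ) with hRdef
  have hR : Function.Injective R := fun t t' h => e.injective (Subtype.ext h)
  set j : Fin F.card → ℕ := fun t => (Finset.univ.filter (fun i => z i = R t)).card with hj
  have hsum : ∑ t, j t = n + 1 := by
    have h2 : (Finset.univ : Finset (Fin (n+1))).card =
        ∑ w ∈ F, (Finset.univ.filter (fun i => z i = w)).card :=
      Finset.card_eq_sum_card_fiberwise (fun i _ => Finset.mem_image_of_mem z (Finset.mem_univ i))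
    calc ∑ t, j t
        = ∑ w : {w // w ∈ F}, (Finset.univ.filter (fun i => z i = (w : Fin d → ℤ))).card :=
          Fintype.sum_equiv e _ _ (fun t => rfl)
      _ = ∑ w ∈ F, (Finset.univ.filter (fun i => z i = w)).card := Finset.sum_coe_sort F (fun w => (Finset.univ.filter (fun i => z i = w)).card)
      _ = n + 1 := by rw [← h2]; simp
  have hsub : {ω | ∃ y : Fin (n+1) → EuclideanSpace ℝ (Fin d), Function.Injective y ∧
        ∀ i, y i ∈ Φ ω ∩ cube δ (z i)} ⊆
      {ω | ∀ t, j t ≤ (Φ ω ∩ cube δ (R t)).ncard} := by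
    rintro ω ⟨y, hyinj, hy⟩
    intro t
    have hfin : (Φ ω ∩ cube δ (R t)).Finite := hΦ.1 ω _ (cube_bounded hδ (R t))
    set s := Finset.univ.filter (fun i => z i = R t) with hs
    have himg : ↑(s.image y) ⊆ Φ ω ∩ cube δ (R t) := by
      intro x hx
      simp only [hs, Finset.coe_image, Set.mem_image, Finset.mem_coe, Finset.mem_filter] at hx
      obtain ⟨i, ⟨-, hzi⟩, rfl⟩ := hx
      have hyi := hy i
      rw [hzi] at hyi
      exact hyi
    have hcard : (s.image y).card = j t := by
      rw [Finset.card_image_of_injective _ hyinj]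
    calc j t = ((s.image y : Finset _) : Set _).ncard := by rw [Set.ncard_coe_finset, hcard]
      _ ≤ (Φ ω ∩ cube δ (R t)).ncard := Set.ncard_le_ncard himg hfin
  calc P {ω | ∃ y : Fin (n+1) → EuclideanSpace ℝ (Fin d), Function.Injective y ∧
        ∀ i, y i ∈ Φ ω ∩ cube δ (z i)}
      ≤ P {ω | ∀ t, j t ≤ (Φ ω ∩ cube δ (R t)).ncard} := measure_mono hsub
    _ ≤ ENNReal.ofReal ((lam * δ ^ d) ^ (∑ t, j t)) := joint_bound hΦ hlam hδ hR j
    _ = ENNReal.ofReal ((lam * δ ^ d) ^ (n+1)) := by rw [hsum]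


def diffs {n : ℕ} (z : Fin (n+1) → Fin d → ℤ) : (Fin d → ℤ) × (Fin n → Fin d → ℤ) :=
  (z 0, fun k => z k.succ - z k.castSucc)

lemma diffs_injective {n : ℕ} : Function.Injective (diffs (d := d) (n := n)) := by
  intro z z' h
  have h0 : z 0 = z' 0 := congrArg Prod.fst h
  have hdiff : ∀ k : Fin n, z k.succ - z k.castSucc = z' k.succ - z' k.castSucc :=
    fun k => congrFun (congrArg Prod.snd h) k
  funext i
  obtain ⟨iv, hiv⟩ := i
  induction iv with
  | zero => exact h0
  | succ mval ih =>
    have hmn : mval < n := by omega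
    set k : Fin n := ⟨mval, hmn⟩ with hk
    have hcast : z k.castSucc = z' k.castSucc := ih (by omega)
    have hstep := hdiff k
    have hsucc : z k.succ = z' k.succ := by
      have := sub_left_inj.mp (hstep.trans (by rw [← hcast]))
      exact this
    exact hsucc


lemma corner_sub {δ : ℝ} (u u' : Fin d → ℤ) :
    corner δ (u - u') = corner δ u - corner δ u' := by
  ext j
  show ((u j - u' j : ℤ) : ℝ) * δ = (corner δ u - corner δ u') j
  have : (corner δ u - corner δ u') j = (u j : ℝ) * δ - (u' j : ℝ) * δ := rfl
  rw [this]
  push_cast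
  ring

lemma norm_le_of_cube {δ : ℝ} (hδ : 0 < δ) {z : Fin d → ℤ}
    {x : EuclideanSpace ℝ (Fin d)} (hx : x ∈ cube δ z) :
    |‖x‖ - ‖corner δ z‖| ≤ δ * Real.sqrt d := by
  have h := dist_corner_le hδ hx
  calc |‖x‖ - ‖corner δ z‖| ≤ ‖x - corner δ z‖ := abs_norm_sub_norm_le _ _
    _ = dist x (corner δ z) := (dist_eq_norm _ _).symm
    _ ≤ δ * Real.sqrt d := h

lemma interval_zero (hd : 1 ≤ d) (hΦ : IsPoissonPP d lam P Φ) (hlam : 0 < lam)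
    {a b : ℝ} (ha : 0 ≤ a) (hab : a < b)
    (hsmall : lam * (volume (ball (0 : EuclideanSpace ℝ (Fin d)) 1)).toReal * (b ^ d - a ^ d)
      < 1/2) (m : ℕ) :
    P {ω | ∀ n : ℕ, ∃ y : Fin (n+1) → EuclideanSpace ℝ (Fin d), Function.Injective y ∧
      (∀ i, y i ∈ Φ ω) ∧ ‖y 0‖ ≤ m ∧
      ∀ i : Fin n, a ≤ dist (y i.castSucc) (y i.succ) ∧ dist (y i.castSucc) (y i.succ) ≤ b}
      = 0 := by
  classical
  have hj0 : (0 : ℕ) < d := hd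
  haveI : Nontrivial (EuclideanSpace ℝ (Fin d)) := by
    refine nontrivial_of_ne (EuclideanSpace.single (⟨0, hj0⟩ : Fin d) (1:ℝ)) 0 ?_
    intro hcontra
    have h1 : (EuclideanSpace.single (⟨0, hj0⟩ : Fin d) (1:ℝ)) (⟨0, hj0⟩ : Fin d) = 1 := by
      simp
    rw [hcontra] at h1
    exact one_ne_zero h1.symm
  have hvne : (volume (ball (0 : EuclideanSpace ℝ (Fin d)) 1)) ≠ ⊤ := measure_ball_lt_top.ne
  set vt : ℝ := (volume (ball (0 : EuclideanSpace ℝ (Fin d)) 1)).toReal with hvtdef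
  have hvt0 : 0 ≤ vt := ENNReal.toReal_nonneg
  have hveq : volume (ball (0 : EuclideanSpace ℝ (Fin d)) 1) = ENNReal.ofReal vt :=
    (ENNReal.ofReal_toReal hvne).symm
  have hfr : Module.finrank ℝ (EuclideanSpace ℝ (Fin d)) = d := by
    simp [finrank_euclideanSpace]
  set sd : ℝ := Real.sqrt d with hsddef
  have hsd : 0 ≤ sd := Real.sqrt_nonneg _
  have hb0 : 0 < b := lt_of_le_of_lt ha hab
  -- choose δ
  have hcont : Continuous (fun t : ℝ =>
      lam * vt * ((b + 3*t*sd)^d - max (a - 3*t*sd) 0 ^ d)) := by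
    apply continuous_const.mul
    apply Continuous.sub
    · exact (continuous_const.add ((continuous_const.mul continuous_id).mul
        continuous_const)).pow d
    · exact ((continuous_const.sub ((continuous_const.mul continuous_id).mul
        continuous_const)).max continuous_const).pow d
  have hψ0 : (fun t : ℝ =>
      lam * vt * ((b + 3*t*sd)^d - max (a - 3*t*sd) 0 ^ d)) 0 < 3/4 := by
    simp only [mul_zero, zero_mul, add_zero, sub_zero, max_eq_left ha]
    linarith
  obtain ⟨δ, hδpos, hψδ⟩ : ∃ δ > (0:ℝ),
      lam * vt * ((b + 3*δ*sd)^d - max (a - 3*δ*sd) 0 ^ d) ≤ 3/4 := by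
    have hev := (hcont.continuousAt (x := 0)).eventually_lt continuousAt_const hψ0
    rw [Metric.eventually_nhds_iff] at hev
    obtain ⟨ε, hε, hball⟩ := hev
    refine ⟨ε/2, half_pos hε, (hball ?_).le⟩
    rw [Real.dist_eq, sub_zero, abs_of_pos (half_pos hε)]
    linarith
  -- the index sets
  set A₀ : Set (Fin d → ℤ) := {w | ‖corner δ w‖ ≤ m + δ * sd} with hA₀def
  set W₀ : Set (EuclideanSpace ℝ (Fin d)) := closedBall 0 (m + 2*δ*sd) with hW₀def
  have hA₀W : ∀ w ∈ A₀, cube δ w ⊆ W₀ := by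
    intro w hw x hx
    rw [hW₀def, mem_closedBall, dist_zero_right]
    have h1 := norm_le_of_cube hδpos hx
    have h2 := abs_le.mp h1
    have := hw
    rw [hA₀def, Set.mem_setOf_eq] at this
    linarith [h2.2]
  have hA₀fin : A₀.Finite := set_finite_of_cubes hδpos measure_closedBall_lt_top.ne hA₀W
  set F₀ : Finset (Fin d → ℤ) := hA₀fin.toFinset with hF₀def
  set R₂ : ℝ := b + 3*δ*sd with hR₂def
  set R₁ : ℝ := max (a - 3*δ*sd) 0 with hR₁def
  have hR₁nonneg : 0 ≤ R₁ := le_max_right _ _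
  have hR₂pos : 0 < R₂ := by
    rw [hR₂def]; positivity
  have hR₁₂ : R₁ ≤ R₂ := by
    rw [hR₁def, hR₂def]
    apply max_le <;> nlinarith [mul_nonneg hδpos.le hsd]
  set W₁ : Set (EuclideanSpace ℝ (Fin d)) := closedBall 0 R₂ \ ball 0 R₁ with hW₁def
  set A₁ : Set (Fin d → ℤ) :=
    {u | a - 2*δ*sd ≤ ‖corner δ u‖ ∧ ‖corner δ u‖ ≤ b + 2*δ*sd} with hA₁def
  have hA₁W : ∀ u ∈ A₁, cube δ u ⊆ W₁ := by
    intro u hu x hx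
    rw [hA₁def, Set.mem_setOf_eq] at hu
    have h1 := abs_le.mp (norm_le_of_cube hδpos hx)
    constructor
    · rw [mem_closedBall, dist_zero_right]
      rw [hR₂def]; linarith [h1.2, hu.2]
    · rw [mem_ball, dist_zero_right]
      push_neg
      apply max_le
      · linarith [h1.1, hu.1]
      · exact norm_nonneg x
  have hW₁ne : volume W₁ ≠ ⊤ :=
    (lt_of_le_of_lt (measure_mono Set.diff_subset) measure_closedBall_lt_top).ne
  have hA₁fin : A₁.Finite := set_finite_of_cubes hδpos hW₁ne hA₁W
  set F₁ : Finset (Fin d → ℤ) := hA₁fin.toFinset with hF₁def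
  have hF₁bound : (F₁.card : ℝ≥0∞) * ENNReal.ofReal (δ^d) ≤ volume W₁ :=
    finset_card_bound hδpos F₁ (fun u hu => hA₁W u (hA₁fin.mem_toFinset.mp hu))
  -- volume of the annulus
  have hWvol : volume W₁ ≤ ENNReal.ofReal (vt * (R₂^d - R₁^d)) := by
    have hpow : R₁^d ≤ R₂^d := pow_le_pow_left₀ hR₁nonneg hR₁₂ d
    rw [hW₁def, measure_diff (ball_subset_closedBall.trans
        (closedBall_subset_closedBall hR₁₂)) measurableSet_ball.nullMeasurableSet
        measure_ball_lt_top.ne]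
    rw [Measure.addHaar_closedBall _ _ hR₂pos.le, Measure.addHaar_ball _ _ hR₁nonneg, hfr]
    rw [tsub_le_iff_right, hveq, ← ENNReal.ofReal_mul (pow_nonneg hR₂pos.le d),
      ← ENNReal.ofReal_mul (pow_nonneg hR₁nonneg d),
      ← ENNReal.ofReal_add (mul_nonneg hvt0 (by linarith))
        (mul_nonneg (pow_nonneg hR₁nonneg d) hvt0)]
    apply ENNReal.ofReal_le_ofReal
    apply le_of_eq
    ring
  set c : ℝ≥0∞ := ENNReal.ofReal (lam * δ^d) with hcdef
  set θ : ℝ≥0∞ := (F₁.card : ℝ≥0∞) * c with hθdef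
  have hθ : θ ≤ ENNReal.ofReal (3/4) := by
    have h1 : θ = ENNReal.ofReal lam * ((F₁.card : ℝ≥0∞) * ENNReal.ofReal (δ^d)) := by
      rw [hθdef, hcdef, ENNReal.ofReal_mul hlam.le]
      ring
    rw [h1]
    calc ENNReal.ofReal lam * ((F₁.card : ℝ≥0∞) * ENNReal.ofReal (δ^d))
        ≤ ENNReal.ofReal lam * ENNReal.ofReal (vt * (R₂^d - R₁^d)) :=
          mul_le_mul_right (hF₁bound.trans hWvol) _
      _ = ENNReal.ofReal (lam * (vt * (R₂^d - R₁^d))) :=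
          (ENNReal.ofReal_mul hlam.le).symm
      _ ≤ ENNReal.ofReal (3/4) := by
          apply ENNReal.ofReal_le_ofReal
          calc lam * (vt * (R₂^d - R₁^d))
              = lam * vt * ((b + 3*δ*sd)^d - max (a - 3*δ*sd) 0 ^ d) := by
                rw [hR₂def, hR₁def]; ring
            _ ≤ 3/4 := hψδ
  set K : ℝ≥0∞ := (F₀.card : ℝ≥0∞) * c with hKdef
  have hKne : K ≠ ⊤ := ENNReal.mul_ne_top (ENNReal.natCast_ne_top _) ENNReal.ofReal_ne_top
  -- bound each G n
  have hG : ∀ n : ℕ,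
      P {ω | ∃ y : Fin (n+1) → EuclideanSpace ℝ (Fin d), Function.Injective y ∧
        (∀ i, y i ∈ Φ ω) ∧ ‖y 0‖ ≤ m ∧
        ∀ i : Fin n, a ≤ dist (y i.castSucc) (y i.succ) ∧ dist (y i.castSucc) (y i.succ) ≤ b}
        ≤ K * θ ^ n := by
    intro n
    set S : Set (Fin (n+1) → Fin d → ℤ) :=
      {z | z 0 ∈ A₀ ∧ ∀ k : Fin n, (z k.succ - z k.castSucc) ∈ A₁} with hSdef
    have hSsub : {ω | ∃ y : Fin (n+1) → EuclideanSpace ℝ (Fin d), Function.Injective y ∧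
        (∀ i, y i ∈ Φ ω) ∧ ‖y 0‖ ≤ m ∧
        ∀ i : Fin n, a ≤ dist (y i.castSucc) (y i.succ) ∧ dist (y i.castSucc) (y i.succ) ≤ b}
        ⊆ ⋃ z ∈ S, {ω | ∃ y : Fin (n+1) → EuclideanSpace ℝ (Fin d), Function.Injective y ∧
          ∀ i, y i ∈ Φ ω ∩ cube δ (z i)} := by
      rintro ω ⟨y, hyinj, hymem, hy0, hystep⟩
      set z : Fin (n+1) → Fin d → ℤ := fun i => gridOf δ (y i) with hzdef
      have hycube : ∀ i, y i ∈ cube δ (z i) := fun i => mem_cube_gridOf hδpos (y i)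
      have hzS : z ∈ S := by
        constructor
        · rw [hA₀def, Set.mem_setOf_eq]
          have h1 := abs_le.mp (norm_le_of_cube hδpos (hycube 0))
          linarith [h1.1]
        · intro k
          rw [hA₁def, Set.mem_setOf_eq, corner_sub]
          set c1 := corner δ (z k.succ) with hc1
          set c2 := corner δ (z k.castSucc) with hc2
          set y1 := y k.succ with hy1
          set y2 := y k.castSucc with hy2
          have hdd : ‖c1 - c2‖ = dist c1 c2 := (dist_eq_norm _ _).symm
          have e1 : dist y1 c1 ≤ δ * Real.sqrt d := dist_corner_le hδpos (hycube k.succ)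
          have e2 : dist y2 c2 ≤ δ * Real.sqrt d := dist_corner_le hδpos (hycube k.castSucc)
          have hstep := hystep k
          have t1 : dist c1 c2 ≤ dist c1 y1 + dist y1 y2 + dist y2 c2 := dist_triangle4 _ _ _ _
          have t2 : dist y2 y1 ≤ dist y2 c2 + dist c2 c1 + dist c1 y1 := dist_triangle4 _ _ _ _
          have q1 : dist c1 y1 = dist y1 c1 := dist_comm _ _
          have q2 : dist c2 c1 = dist c1 c2 := dist_comm _ _
          have q3 : dist y1 y2 = dist y2 y1 := dist_comm _ _
          rw [hdd]
          constructor
          · linarith [hstep.1, hsddef]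
          · linarith [hstep.2, hsddef]
      exact Set.mem_biUnion hzS ⟨y, hyinj, fun i => ⟨hymem i, hycube i⟩⟩
    -- S is finite with controlled cardinality
    have hSpre : S ⊆ diffs ⁻¹' (A₀ ×ˢ (Set.univ.pi fun _ : Fin n => A₁)) := by
      intro z hz
      rw [Set.mem_preimage, Set.mem_prod]
      exact ⟨hz.1, fun k _ => hz.2 k⟩
    have hSfin : S.Finite :=
      ((hA₀fin.prod (Set.Finite.pi fun _ => hA₁fin)).preimage
        diffs_injective.injOn).subset hSpre
    have hcard : (hSfin.toFinset.card : ℝ≥0∞) ≤ ((F₀.card * F₁.card ^ n : ℕ) : ℝ≥0∞) := by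
      have h1 : hSfin.toFinset.card = S.ncard := (Set.ncard_eq_toFinset_card S hSfin).symm
      have h2 : S.ncard = (diffs '' S).ncard :=
        (Set.ncard_image_of_injective S diffs_injective).symm
      have h3 : diffs '' S ⊆ ↑(F₀ ×ˢ Fintype.piFinset fun _ : Fin n => F₁) := by
        rintro q ⟨z, hz, rfl⟩
        rw [Finset.coe_product]
        constructor
        · simp only [hF₀def, Set.Finite.coe_toFinset]
          exact hz.1
        · rw [Finset.mem_coe, Fintype.mem_piFinset]
          intro k
          rw [hF₁def, Set.Finite.mem_toFinset]
          exact hz.2 k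
      have h4 : (diffs '' S).ncard ≤ (F₀ ×ˢ Fintype.piFinset fun _ : Fin n => F₁).card := by
        rw [← Set.ncard_coe_finset]
        exact Set.ncard_le_ncard h3 (Finset.finite_toSet _)
      have h5 : (F₀ ×ˢ Fintype.piFinset fun _ : Fin n => F₁).card = F₀.card * F₁.card ^ n := by
        rw [Finset.card_product, Fintype.card_piFinset]
        simp [Finset.prod_const]
      rw [h1, h2]
      exact_mod_cast h5 ▸ h4
    calc P {ω | ∃ y : Fin (n+1) → EuclideanSpace ℝ (Fin d), Function.Injective y ∧
        (∀ i, y i ∈ Φ ω) ∧ ‖y 0‖ ≤ m ∧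
        ∀ i : Fin n, a ≤ dist (y i.castSucc) (y i.succ) ∧ dist (y i.castSucc) (y i.succ) ≤ b}
        ≤ P (⋃ z ∈ hSfin.toFinset, {ω | ∃ y : Fin (n+1) → EuclideanSpace ℝ (Fin d),
            Function.Injective y ∧ ∀ i, y i ∈ Φ ω ∩ cube δ (z i)}) := by
          apply measure_mono
          refine hSsub.trans ?_
          intro ω hω
          rw [Set.mem_iUnion₂] at hω ⊢
          obtain ⟨z, hz, hmem⟩ := hω
          exact ⟨z, hSfin.mem_toFinset.mpr hz, hmem⟩
      _ ≤ ∑ z ∈ hSfin.toFinset, P {ω | ∃ y : Fin (n+1) → EuclideanSpace ℝ (Fin d),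
            Function.Injective y ∧ ∀ i, y i ∈ Φ ω ∩ cube δ (z i)} :=
          measure_biUnion_finset_le _ _
      _ ≤ hSfin.toFinset.card • ENNReal.ofReal ((lam * δ^d)^(n+1)) :=
          Finset.sum_le_card_nsmul _ _ _ (fun z _ => tuple_bound hΦ hlam hδpos n z)
      _ = (hSfin.toFinset.card : ℝ≥0∞) * ENNReal.ofReal ((lam * δ^d)^(n+1)) := by
          rw [nsmul_eq_mul]
      _ ≤ ((F₀.card * F₁.card ^ n : ℕ) : ℝ≥0∞) * ENNReal.ofReal ((lam * δ^d)^(n+1)) :=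
          mul_le_mul_left hcard _
      _ = K * θ ^ n := by
          rw [ENNReal.ofReal_pow (by positivity)]
          push_cast
          rw [hKdef, hθdef, hcdef]
          ring
  -- conclude
  have hbound : ∀ n : ℕ,
      P {ω | ∀ n : ℕ, ∃ y : Fin (n+1) → EuclideanSpace ℝ (Fin d), Function.Injective y ∧
        (∀ i, y i ∈ Φ ω) ∧ ‖y 0‖ ≤ m ∧
        ∀ i : Fin n, a ≤ dist (y i.castSucc) (y i.succ) ∧ dist (y i.castSucc) (y i.succ) ≤ b}
        ≤ K * ENNReal.ofReal (3/4) ^ n := by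
    intro n
    calc P {ω | ∀ n : ℕ, ∃ y : Fin (n+1) → EuclideanSpace ℝ (Fin d), Function.Injective y ∧
        (∀ i, y i ∈ Φ ω) ∧ ‖y 0‖ ≤ m ∧
        ∀ i : Fin n, a ≤ dist (y i.castSucc) (y i.succ) ∧ dist (y i.castSucc) (y i.succ) ≤ b}
        ≤ P {ω | ∃ y : Fin (n+1) → EuclideanSpace ℝ (Fin d), Function.Injective y ∧
        (∀ i, y i ∈ Φ ω) ∧ ‖y 0‖ ≤ m ∧
        ∀ i : Fin n, a ≤ dist (y i.castSucc) (y i.succ) ∧ dist (y i.castSucc) (y i.succ) ≤ b} :=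
          measure_mono (fun ω hω => hω n)
      _ ≤ K * θ ^ n := hG n
      _ ≤ K * ENNReal.ofReal (3/4) ^ n :=
          mul_le_mul_right (pow_le_pow_left' hθ n) K
  have htend : Filter.Tendsto (fun n : ℕ => K * ENNReal.ofReal (3/4) ^ n)
      Filter.atTop (nhds 0) := by
    have h34 : ENNReal.ofReal (3/4) < 1 := by
      rw [ENNReal.ofReal_lt_one]; norm_num
    have hp := ENNReal.tendsto_pow_atTop_nhds_zero_of_lt_one h34
    have := ENNReal.Tendsto.const_mul hp (Or.inr hKne)
    simpa using this
  exact le_antisymm (ge_of_tendsto' htend (fun n => hbound n) |>.trans_eq rfl) zero_le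

end PoissonNDC

end

/-- A homogeneous Poisson point process on `ℝ^d` almost surely contains no infinite
descending chain. -/
theorem poisson_no_descending_chain (d : ℕ) (hd : 1 ≤ d) (lam : ℝ) (hlam : 0 < lam)
    {Ω : Type*} [MeasurableSpace Ω] (P : Measure Ω) [IsProbabilityMeasure P]
    (Φ : Ω → Set (EuclideanSpace ℝ (Fin d))) (hΦ : IsPoissonPP d lam P Φ) :
    P {ω | ∃ x : ℕ → EuclideanSpace ℝ (Fin d),
      (∀ i, x i ∈ Φ ω) ∧ Function.Injective x ∧
      ∀ i : ℕ, dist (x (i + 1)) (x (i + 2)) < dist (x i) (x (i + 1))} = 0 := by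
  classical
  open Metric Set Function in
  set vt : ℝ := (volume (ball (0 : EuclideanSpace ℝ (Fin d)) 1)).toReal with hvtdef
  have hvtpos : 0 < vt := by
    rw [hvtdef]
    exact ENNReal.toReal_pos (measure_ball_pos volume 0 one_pos).ne' measure_ball_lt_top.ne
  set H : ℚ → ℚ → ℕ → Set Ω := fun a b m =>
    {ω | ∀ n : ℕ, ∃ y : Fin (n+1) → EuclideanSpace ℝ (Fin d), Function.Injective y ∧
      (∀ i, y i ∈ Φ ω) ∧ ‖y 0‖ ≤ m ∧
      ∀ i : Fin n, (a:ℝ) ≤ dist (y i.castSucc) (y i.succ) ∧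
        dist (y i.castSucc) (y i.succ) ≤ (b:ℝ)} with hHdef
  set Good : Set (ℚ × ℚ × ℕ) :=
    {q | 0 ≤ q.1 ∧ ((q.1 : ℝ) < ((q.2.1 : ℚ) : ℝ)) ∧
      lam * vt * (((q.2.1 : ℚ):ℝ)^d - ((q.1:ℚ):ℝ)^d) < 1/2} with hGooddef
  have hzero : ∀ q ∈ Good, P (H q.1 q.2.1 q.2.2) = 0 := by
    rintro ⟨a, b, m⟩ ⟨h1, h2, h3⟩
    exact PoissonNDC.interval_zero hd hΦ hlam (by exact_mod_cast h1) h2 h3 m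
  have hsub : {ω | ∃ x : ℕ → EuclideanSpace ℝ (Fin d),
      (∀ i, x i ∈ Φ ω) ∧ Function.Injective x ∧
      ∀ i : ℕ, dist (x (i + 1)) (x (i + 2)) < dist (x i) (x (i + 1))}
      ⊆ ⋃ q ∈ Good, H q.1 q.2.1 q.2.2 := by
    rintro ω ⟨x, hxmem, hxinj, hxdec⟩
    set D : ℕ → ℝ := fun i => dist (x i) (x (i+1)) with hDdef
    have hanti : StrictAnti D := strictAnti_nat_of_succ_lt (fun i => hxdec i)
    have hbdd : BddBelow (Set.range D) := ⟨0, by rintro _ ⟨i, rfl⟩; exact dist_nonneg⟩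
    set c : ℝ := ⨅ i, D i with hcdef
    have hc0 : 0 ≤ c := le_ciInf (fun i => dist_nonneg)
    have hcle : ∀ i, c ≤ D i := fun i => ciInf_le hbdd i
    have htendD : Filter.Tendsto D Filter.atTop (nhds c) :=
      tendsto_atTop_ciInf hanti.antitone hbdd
    set κ : ℝ := 1 / (2 * (lam * vt)) with hκdef
    have hκpos : 0 < κ := by
      rw [hκdef]
      exact one_div_pos.mpr (by linarith [mul_pos hlam hvtpos])
    obtain ⟨η, hηpos, hη⟩ : ∃ η > (0:ℝ), ∀ t : ℝ, |t - c| < η → |t^d - c^d| < κ/2 := by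
      have hcont : ContinuousAt (fun t : ℝ => t ^ d) c := (continuous_pow d).continuousAt
      rw [Metric.continuousAt_iff] at hcont
      obtain ⟨ηt, hηt, hball⟩ := hcont (κ/2) (half_pos hκpos)
      refine ⟨ηt, hηt, fun t ht => ?_⟩
      have h := hball (show dist t c < ηt by rwa [Real.dist_eq])
      rwa [Real.dist_eq] at h
    obtain ⟨qa, hqa0, hqac, hqad⟩ :
        ∃ qa : ℚ, 0 ≤ qa ∧ (qa:ℝ) ≤ c ∧ |c^d - (qa:ℝ)^d| < κ/2 := by
      rcases eq_or_lt_of_le hc0 with hc | hc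
      · refine ⟨0, le_refl 0, by rw [← hc]; norm_num, ?_⟩
        have : ((0:ℚ):ℝ) = (0:ℝ) := by norm_num
        rw [← hc, this, sub_self, abs_zero]
        exact half_pos hκpos
      · have hlolt : max (c - η) (c/2) < c := max_lt (by linarith) (by linarith)
        obtain ⟨qa, hqa1, hqa2⟩ := exists_rat_btwn hlolt
        have hqapos : (0:ℝ) < qa :=
          lt_of_le_of_lt (le_trans (by linarith) (le_max_right (c - η) (c/2))) hqa1
        have hqaη : c - η < qa := lt_of_le_of_lt (le_max_left (c - η) (c/2)) hqa1
        refine ⟨qa, by exact_mod_cast hqapos.le, hqa2.le, ?_⟩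
        rw [abs_sub_comm]
        exact hη _ (abs_lt.mpr ⟨by linarith, by linarith⟩)
    obtain ⟨qb, hqbc, hqbd⟩ : ∃ qb : ℚ, c < (qb:ℝ) ∧ |(qb:ℝ)^d - c^d| < κ/2 := by
      obtain ⟨qb, h1, h2⟩ := exists_rat_btwn (lt_add_of_pos_right c hηpos)
      exact ⟨qb, h1, hη _ (abs_lt.mpr ⟨by linarith, by linarith⟩)⟩
    obtain ⟨N, hN⟩ := (Filter.eventually_atTop).mp (htendD.eventually_lt_const hqbc)
    set m : ℕ := ⌈‖x N‖⌉₊ with hm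
    have hGoodmem : ((qa, qb, m) : ℚ × ℚ × ℕ) ∈ Good := by
      refine ⟨hqa0, ?_, ?_⟩
      · have : (qa:ℝ) < (qb:ℝ) := lt_of_le_of_lt hqac hqbc
        exact_mod_cast this
      · have hd1 := abs_lt.mp hqad
        have hd2 := abs_lt.mp hqbd
        have habs : (qb:ℝ)^d - (qa:ℝ)^d < κ := by linarith
        calc lam * vt * ((qb:ℝ)^d - (qa:ℝ)^d) < lam * vt * κ :=
              mul_lt_mul_of_pos_left habs (mul_pos hlam hvtpos)
          _ = 1/2 := by
              rw [hκdef]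
              field_simp
          _ ≤ 1/2 := le_refl _
    refine Set.mem_biUnion hGoodmem ?_
    intro n
    refine ⟨fun i => x (N + (i : ℕ)), ?_, fun i => hxmem _, ?_, ?_⟩
    · intro i j hij
      have h1 : N + (i:ℕ) = N + (j:ℕ) := hxinj hij
      have h2 : (i:ℕ) = (j:ℕ) := by omega
      exact Fin.ext h2
    · show ‖x (N + ((0 : Fin (n+1)) : ℕ))‖ ≤ (m : ℝ)
      exact Nat.le_ceil _
    · intro i
      have hcs : ((i.castSucc : Fin (n+1)) : ℕ) = (i : ℕ) := rfl
      have hsc : ((i.succ : Fin (n+1)) : ℕ) = (i : ℕ) + 1 := rfl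
      have hDeq : dist (x (N + ((i.castSucc : Fin (n+1)) : ℕ)))
          (x (N + ((i.succ : Fin (n+1)) : ℕ))) = D (N + (i:ℕ)) := by
        rw [hcs, hsc, hDdef]
        simp only []
        rfl
      rw [hDeq]
      constructor
      · exact le_trans hqac (hcle _)
      · exact (hN (N + (i:ℕ)) (Nat.le_add_right N _)).le
  have hle : P {ω | ∃ x : ℕ → EuclideanSpace ℝ (Fin d),
      (∀ i, x i ∈ Φ ω) ∧ Function.Injective x ∧
      ∀ i : ℕ, dist (x (i + 1)) (x (i + 2)) < dist (x i) (x (i + 1))}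
      ≤ P (⋃ q ∈ Good, H q.1 q.2.1 q.2.2) := measure_mono hsub
  have hz : P (⋃ q ∈ Good, H q.1 q.2.1 q.2.2) = 0 := by
    rw [measure_biUnion_null_iff (Set.to_countable Good)]
    exact hzero
  exact le_antisymm (hle.trans_eq hz) zero_le
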